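/- Let ζ be a subgaussian random variable, let X, X' ∈ ℝ^n be independent random vectors each with i.i.d. coordinates distributed as ζ, and let J ∪ I = [n] be a partition of [n]. Let M be an n×n real symmetric matrix, u ∈ ℝ^n and θ ∈ ℝ. Then |𝔼_X e^{2πi θ ⟨M X, X⟩ + ⟨X, u⟩}|² ≤ 𝔼_{X_J, X'_J} [ e^{⟨(X + X')_J, u⟩} · | 𝔼_{X_I} e^{4πi θ ⟨M (X − X')_J, X_I⟩ + 2⟨X_I, u⟩} | ]. -/

import Mathlib

open MeasureTheory ProbabilityTheory Matrix
open scoped BigOperators ENNReal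

noncomputable section

/-- Euclidean norm of a finitely indexed real vector. -/
def euclNorm {ι : Type*} [Fintype ι] (x : ι → ℝ) : ℝ :=
  Real.sqrt (∑ i, (x i) ^ 2)

/-- The least singular value of a square real matrix:
`σ_min(M) = inf { ‖Mx‖₂ : ‖x‖₂ = 1 }`. -/
def sigmaMin {n : ℕ} (M : Matrix (Fin n) (Fin n) ℝ) : ℝ :=
  sInf {r : ℝ | ∃ x : Fin n → ℝ, euclNorm x = 1 ∧ r = euclNorm (M.mulVec x)}

/-- `ζ ∈ Γ_B`: a measurable real random variable with mean `0`, variance `1`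
and subgaussian moment `‖ζ‖_{ψ₂} ≤ B`, i.e. `(𝔼|ζ|^p)^{1/p} ≤ B √p` for all `p ≥ 1`. -/
def MemGammaB {Ω : Type*} [MeasurableSpace Ω] (μ : Measure Ω) (ζ : Ω → ℝ) (B : ℝ) : Prop :=
  Measurable ζ ∧ (∫ ω, ζ ω ∂μ) = 0 ∧ (∫ ω, (ζ ω) ^ 2 ∂μ) = 1 ∧
    ∀ p : ℝ, 1 ≤ p → (∫⁻ ω, ENNReal.ofReal (|ζ ω| ^ p) ∂μ) ≤ ENNReal.ofReal ((B * Real.sqrt p) ^ p)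

/-- `A ~ Sym_n(ζ)`: a random `n × n` real symmetric matrix whose entries on and above
the diagonal are i.i.d. copies of `ζ`. -/
def IsSymRandomMatrix {Ω : Type*} [MeasurableSpace Ω] (μ : Measure Ω) (ζ : Ω → ℝ)
    {n : ℕ} (A : Ω → Matrix (Fin n) (Fin n) ℝ) : Prop :=
  (∀ i j, Measurable fun ω => A ω i j) ∧
  (∀ ω, (A ω).IsSymm) ∧
  (∀ i j : Fin n, i ≤ j → Measure.map (fun ω => A ω i j) μ = Measure.map ζ μ) ∧
  iIndepFun
    (fun p : {p : Fin n × Fin n // p.1 ≤ p.2} => fun ω => A ω p.1.1 p.1.2) μ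

/-- Distance from `w ∈ ℝ^ι` to the integer lattice `ℤ^ι` (Euclidean distance;
coordinatewise the nearest integer is `round`). -/
def torusNorm {ι : Type*} [Fintype ι] (w : ι → ℝ) : ℝ :=
  Real.sqrt (∑ i, (w i - (round (w i) : ℝ)) ^ 2)

/-- The least common denominator
`D_{α,γ}(v) = inf{ φ > 0 : ‖φ v‖_T ≤ min(γ φ ‖v‖₂, √(α n)) }`. -/
def LCD {ι : Type*} [Fintype ι] (α γ : ℝ) (v : ι → ℝ) : ℝ :=
  sInf {φ : ℝ | 0 < φ ∧
    torusNorm (φ • v) ≤ min (γ * φ * euclNorm v) (Real.sqrt (α * (Fintype.card ι)))}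

/-- A random vector with i.i.d. coordinates distributed as `ζ`. -/
def IsIIDVector {Ω : Type*} [MeasurableSpace Ω] (μ : Measure Ω) (ζ : Ω → ℝ)
    {ι : Type*} (X : ι → Ω → ℝ) : Prop :=
  (∀ i, Measurable (X i)) ∧ (∀ i, Measure.map (X i) μ = Measure.map ζ μ) ∧
  iIndepFun X μ

/-- A subgaussian real random variable: `‖ζ‖_{ψ₂} < ∞`, i.e. there is `B` with
`(𝔼|ζ|^p)^{1/p} ≤ B √p` for all `p ≥ 1`. -/
def IsSubgaussianRV {Ω : Type*} [MeasurableSpace Ω] (μ : Measure Ω) (ζ : Ω → ℝ) : Prop :=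
  Measurable ζ ∧ ∃ B : ℝ,
    ∀ p : ℝ, 1 ≤ p →
      (∫⁻ ω, ENNReal.ofReal (|ζ ω| ^ p) ∂μ) ≤ ENNReal.ofReal ((B * Real.sqrt p) ^ p)

/-- For `v ∈ ℝ^n` and `J ⊆ [n]`, the vector `v_J` whose `i`-th coordinate is `v i`
for `i ∈ J` and `0` otherwise. -/
def restr {n : ℕ} (J : Finset (Fin n)) (v : Fin n → ℝ) : Fin n → ℝ :=
  fun i => if i ∈ J then v i else 0


private lemma amgm_aux (t s : ℝ) (hs : 0 < s) : t ≤ (t ^ 2 * s + s⁻¹) / 2 := by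
  have h2 : s * s⁻¹ = 1 := mul_inv_cancel₀ hs.ne'
  have key : (t * 2) * s ≤ (t ^ 2 * s + s⁻¹) * s := by nlinarith [sq_nonneg (t * s - 1)]
  have := le_of_mul_le_mul_right key hs
  linarith

private lemma summable_aux {C : ℝ} (hC : 0 ≤ C) :
    Summable (fun k : ℕ => (C * Real.sqrt k) ^ k / (Nat.factorial k : ℝ)) := by
  have hb : Summable (fun k : ℕ =>
      ((2 * C ^ 2 * Real.exp 1) ^ k / (Nat.factorial k : ℝ) + (1/2 : ℝ) ^ k) / 2) :=
    ((Real.summable_pow_div_factorial _).add summable_geometric_two).div_const 2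
  refine Summable.of_nonneg_of_le (fun k => by positivity) (fun k => ?_) hb
  set a : ℝ := (C * Real.sqrt k) ^ k / (Nat.factorial k : ℝ) with ha
  have hfac : (0:ℝ) < (Nat.factorial k : ℝ) := by exact_mod_cast Nat.factorial_pos k
  have hs : (0:ℝ) < 2 ^ k := by positivity
  have step1 : a ≤ (a ^ 2 * 2 ^ k + ((2:ℝ) ^ k)⁻¹) / 2 := amgm_aux _ _ hs
  have hkk : ((k:ℝ)) ^ k ≤ Real.exp 1 ^ k * (Nat.factorial k : ℝ) := by
    have h := Real.pow_div_factorial_le_exp _ (Nat.cast_nonneg k) k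
    rw [div_le_iff₀ hfac] at h
    calc ((k:ℝ)) ^ k ≤ Real.exp k * (Nat.factorial k : ℝ) := h
      _ = Real.exp 1 ^ k * (Nat.factorial k : ℝ) := by rw [← Real.exp_nat_mul, mul_one]
  have hnum : ((C * Real.sqrt k) ^ k) ^ 2 * 2 ^ k
      ≤ (2 * C ^ 2 * Real.exp 1) ^ k * (Nat.factorial k : ℝ) := by
    calc ((C * Real.sqrt k) ^ k) ^ 2 * 2 ^ k
        = (2 * C ^ 2) ^ k * (Real.sqrt k ^ 2) ^ k := by ring
      _ = (2 * C ^ 2) ^ k * ((k:ℝ)) ^ k := by rw [Real.sq_sqrt (Nat.cast_nonneg k)]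
      _ ≤ (2 * C ^ 2) ^ k * (Real.exp 1 ^ k * (Nat.factorial k : ℝ)) :=
          mul_le_mul_of_nonneg_left hkk (by positivity)
      _ = (2 * C ^ 2 * Real.exp 1) ^ k * (Nat.factorial k : ℝ) := by ring
  have step2 : a ^ 2 * 2 ^ k ≤ (2 * C ^ 2 * Real.exp 1) ^ k / (Nat.factorial k : ℝ) := by
    have haf : a * (Nat.factorial k : ℝ) = (C * Real.sqrt k) ^ k := by
      rw [ha, div_mul_cancel₀ _ hfac.ne']
    rw [le_div_iff₀ hfac]
    have h3 : (a ^ 2 * 2 ^ k * (Nat.factorial k : ℝ)) * (Nat.factorial k : ℝ)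
        ≤ ((2 * C ^ 2 * Real.exp 1) ^ k) * (Nat.factorial k : ℝ) := by
      calc (a ^ 2 * 2 ^ k * (Nat.factorial k : ℝ)) * (Nat.factorial k : ℝ)
          = (a * (Nat.factorial k : ℝ)) ^ 2 * 2 ^ k := by ring
        _ = ((C * Real.sqrt k) ^ k) ^ 2 * 2 ^ k := by rw [haf]
        _ ≤ ((2 * C ^ 2 * Real.exp 1) ^ k) * (Nat.factorial k : ℝ) := hnum
    exact le_of_mul_le_mul_right h3 hfac
  have step3 : ((2:ℝ) ^ k)⁻¹ = (1/2:ℝ) ^ k := by rw [← inv_pow]; norm_num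
  calc a ≤ (a ^ 2 * 2 ^ k + ((2:ℝ) ^ k)⁻¹) / 2 := step1
    _ ≤ ((2 * C ^ 2 * Real.exp 1) ^ k / (Nat.factorial k : ℝ) + (1/2:ℝ) ^ k) / 2 := by
        rw [step3]; gcongr

private lemma integrable_exp_mul_subg {Ω : Type*} [MeasurableSpace Ω] (μ : Measure Ω)
    [IsProbabilityMeasure μ] (ζ : Ω → ℝ) (hmeas : Measurable ζ) (B : ℝ)
    (hB : ∀ p : ℝ, 1 ≤ p →
      (∫⁻ ω, ENNReal.ofReal (|ζ ω| ^ p) ∂μ) ≤ ENNReal.ofReal ((B * Real.sqrt p) ^ p))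
    (c : ℝ) : Integrable (fun ω => Real.exp (c * ζ ω)) μ := by
  have hexpmeas : Measurable fun ω => Real.exp (c * ζ ω) :=
    Real.measurable_exp.comp (hmeas.const_mul c)
  refine ⟨hexpmeas.aestronglyMeasurable, ?_⟩
  rw [hasFiniteIntegral_iff_ofReal (Filter.Eventually.of_forall fun ω => (Real.exp_pos _).le)]
  -- moment bounds for natural exponents
  have moment : ∀ k : ℕ, (∫⁻ ω, ENNReal.ofReal (|ζ ω| ^ k) ∂μ)
      ≤ ENNReal.ofReal ((|B| * Real.sqrt k) ^ k) := by
    intro k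
    rcases Nat.eq_zero_or_pos k with hk | hk
    · subst hk; simp
    · have h1 : (1:ℝ) ≤ (k:ℝ) := by exact_mod_cast hk
      have h2 := hB k h1
      have h3 : ∀ ω, (|ζ ω| : ℝ) ^ ((k:ℕ):ℝ) = |ζ ω| ^ k := fun ω => Real.rpow_natCast _ k
      calc (∫⁻ ω, ENNReal.ofReal (|ζ ω| ^ k) ∂μ)
          = ∫⁻ ω, ENNReal.ofReal (|ζ ω| ^ ((k:ℕ):ℝ)) ∂μ := by simp_rw [h3]
        _ ≤ ENNReal.ofReal ((B * Real.sqrt k) ^ ((k:ℕ):ℝ)) := h2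
        _ ≤ ENNReal.ofReal ((|B| * Real.sqrt k) ^ k) := by
            apply ENNReal.ofReal_le_ofReal
            calc (B * Real.sqrt k) ^ ((k:ℕ):ℝ) ≤ |(B * Real.sqrt k) ^ ((k:ℕ):ℝ)| :=
                  le_abs_self _
              _ ≤ |B * Real.sqrt k| ^ ((k:ℕ):ℝ) := Real.abs_rpow_le_abs_rpow _ _
              _ = (|B| * Real.sqrt k) ^ ((k:ℕ):ℝ) := by
                  rw [abs_mul, abs_of_nonneg (Real.sqrt_nonneg _)]
              _ = (|B| * Real.sqrt k) ^ k := Real.rpow_natCast _ k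
  -- pointwise bound by the exponential series
  have pt : ∀ ω, ENNReal.ofReal (Real.exp (c * ζ ω))
      ≤ ∑' k : ℕ, ENNReal.ofReal (|c| ^ k * |ζ ω| ^ k / (Nat.factorial k : ℝ)) := by
    intro ω
    have h1 : Real.exp (c * ζ ω) ≤ Real.exp (|c| * |ζ ω|) :=
      Real.exp_le_exp.2 (le_trans (le_abs_self _) (le_of_eq (abs_mul _ _)))
    have h2 : Real.exp (|c| * |ζ ω|) = ∑' k : ℕ, (|c| * |ζ ω|) ^ k / (Nat.factorial k : ℝ) := by
      rw [Real.exp_eq_exp_ℝ, NormedSpace.exp_eq_tsum_div]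
    calc ENNReal.ofReal (Real.exp (c * ζ ω))
        ≤ ENNReal.ofReal (∑' k : ℕ, (|c| * |ζ ω|) ^ k / (Nat.factorial k : ℝ)) :=
          ENNReal.ofReal_le_ofReal (h1.trans_eq h2)
      _ = ∑' k : ℕ, ENNReal.ofReal ((|c| * |ζ ω|) ^ k / (Nat.factorial k : ℝ)) :=
          ENNReal.ofReal_tsum_of_nonneg (fun k => by positivity)
            (Real.summable_pow_div_factorial _)
      _ = ∑' k : ℕ, ENNReal.ofReal (|c| ^ k * |ζ ω| ^ k / (Nat.factorial k : ℝ)) := by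
          simp_rw [mul_pow]
  have term_meas : ∀ k : ℕ, Measurable fun ω =>
      ENNReal.ofReal (|c| ^ k * |ζ ω| ^ k / (Nat.factorial k : ℝ)) := fun k =>
    ENNReal.measurable_ofReal.comp (((hmeas.abs.pow_const k).const_mul _).div_const _)
  have term_le : ∀ k : ℕ, (∫⁻ ω, ENNReal.ofReal (|c| ^ k * |ζ ω| ^ k / (Nat.factorial k : ℝ)) ∂μ)
      ≤ ENNReal.ofReal (|c| ^ k * (|B| * Real.sqrt k) ^ k / (Nat.factorial k : ℝ)) := by
    intro k
    have hc : (0:ℝ) ≤ |c| ^ k / (Nat.factorial k : ℝ) := by positivity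
    have e1 : ∀ ω, |c| ^ k * |ζ ω| ^ k / (Nat.factorial k : ℝ)
        = (|c| ^ k / (Nat.factorial k : ℝ)) * |ζ ω| ^ k := fun ω => by ring
    calc (∫⁻ ω, ENNReal.ofReal (|c| ^ k * |ζ ω| ^ k / (Nat.factorial k : ℝ)) ∂μ)
        = ∫⁻ ω, ENNReal.ofReal (|c| ^ k / (Nat.factorial k : ℝ))
            * ENNReal.ofReal (|ζ ω| ^ k) ∂μ := by
          simp_rw [e1, ENNReal.ofReal_mul hc]
      _ = ENNReal.ofReal (|c| ^ k / (Nat.factorial k : ℝ))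
            * ∫⁻ ω, ENNReal.ofReal (|ζ ω| ^ k) ∂μ :=
          lintegral_const_mul _ (ENNReal.measurable_ofReal.comp (hmeas.abs.pow_const k))
      _ ≤ ENNReal.ofReal (|c| ^ k / (Nat.factorial k : ℝ))
            * ENNReal.ofReal ((|B| * Real.sqrt k) ^ k) := mul_le_mul_right (moment k) _
      _ = ENNReal.ofReal (|c| ^ k * (|B| * Real.sqrt k) ^ k / (Nat.factorial k : ℝ)) := by
          rw [← ENNReal.ofReal_mul hc]; congr 1; ring
  have hsum : Summable (fun k : ℕ => |c| ^ k * (|B| * Real.sqrt k) ^ k / (Nat.factorial k : ℝ)) := by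
    refine (summable_aux (C := |c| * |B|) (by positivity)).congr fun k => ?_
    rw [mul_assoc, mul_pow]
  calc (∫⁻ ω, ENNReal.ofReal (Real.exp (c * ζ ω)) ∂μ)
      ≤ ∫⁻ ω, ∑' k : ℕ, ENNReal.ofReal (|c| ^ k * |ζ ω| ^ k / (Nat.factorial k : ℝ)) ∂μ :=
        lintegral_mono pt
    _ = ∑' k : ℕ, ∫⁻ ω, ENNReal.ofReal (|c| ^ k * |ζ ω| ^ k / (Nat.factorial k : ℝ)) ∂μ :=
        lintegral_tsum fun k => (term_meas k).aemeasurable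
    _ ≤ ∑' k : ℕ, ENNReal.ofReal (|c| ^ k * (|B| * Real.sqrt k) ^ k / (Nat.factorial k : ℝ)) :=
        ENNReal.tsum_le_tsum term_le
    _ = ENNReal.ofReal (∑' k : ℕ, |c| ^ k * (|B| * Real.sqrt k) ^ k / (Nat.factorial k : ℝ)) :=
        (ENNReal.ofReal_tsum_of_nonneg (fun k => by positivity) hsum).symm
    _ < ⊤ := ENNReal.ofReal_lt_top

private lemma map_pi_of_iIndep {Ω ι : Type*} [MeasurableSpace Ω] [Fintype ι] (μ : Measure Ω)
    [IsProbabilityMeasure μ] (f : ι → Ω → ℝ) (hmeas : ∀ i, Measurable (f i))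
    (hindep : iIndepFun f μ) :
    μ.map (fun ω i => f i ω) = Measure.pi (fun i => μ.map (f i)) := by
  haveI : ∀ i, IsProbabilityMeasure (μ.map (f i)) := fun i =>
    Measure.isProbabilityMeasure_map (hmeas i).aemeasurable
  refine (Measure.pi_eq fun s hs => ?_).symm
  rw [Measure.map_apply (measurable_pi_lambda _ hmeas) (MeasurableSet.univ_pi hs)]
  have hpre : (fun ω i => f i ω) ⁻¹' (Set.pi Set.univ s) = ⋂ i, (f i) ⁻¹' (s i) := by
    ext ω; simp [Set.mem_pi]
  rw [hpre, hindep.meas_iInter (fun i => ⟨s i, hs i, rfl⟩)]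
  exact Finset.prod_congr rfl fun i _ => (Measure.map_apply (hmeas i) (hs i)).symm

private lemma integrable_pi_prod {ι : Type*} [Fintype ι] (ν : Measure ℝ) [IsProbabilityMeasure ν]
    (f : ι → ℝ → ℝ) (hf : ∀ i, Integrable (f i) ν) :
    Integrable (fun x : ι → ℝ => ∏ i, f i (x i)) (Measure.pi fun _ => ν) := by
  letI : MeasureSpace ℝ := ⟨ν⟩
  haveI : SigmaFinite (volume : Measure ℝ) := by
    show SigmaFinite ν; infer_instance
  have := MeasureTheory.Integrable.fintype_prod (f := f) (fun i => hf i)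
  simpa [volume_pi] using this

private lemma norm_cexp_aux (x t : ℝ) :
    ‖Complex.exp ((x : ℂ) * Complex.I + (t : ℂ))‖ = Real.exp t := by
  rw [Complex.norm_exp]
  congr 1
  simp [Complex.add_re, Complex.mul_re]

private lemma abstract_decoupling {A C : Type*} [MeasurableSpace A] [MeasurableSpace C]
    (α : Measure A) (γ : Measure C) [IsProbabilityMeasure α] [IsProbabilityMeasure γ]
    (p R : A → ℝ) (r S : C → ℝ) (β : A × C → ℝ)
    (hp : Measurable p) (hR : Measurable R) (hr : Measurable r) (hS : Measurable S)
    (hβ : Measurable β)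
    (hIR : Integrable (fun a => Real.exp (R a)) α)
    (hIS : Integrable (fun c => Real.exp (S c)) γ)
    (hIS2 : Integrable (fun c => Real.exp (2 * S c)) γ) :
    ‖∫ z : C × A, Complex.exp (((p z.2 + β (z.2, z.1) + r z.1 : ℝ) : ℂ) * Complex.I
        + ((R z.2 + S z.1 : ℝ) : ℂ)) ∂(γ.prod α)‖ ^ 2 ≤
      ∫ w : A × A, Real.exp (R w.1 + R w.2) *
        ‖∫ c, Complex.exp (((β (w.1, c) - β (w.2, c) : ℝ) : ℂ) * Complex.I
          + ((2 * S c : ℝ) : ℂ)) ∂γ‖ ∂(α.prod α) := by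
  set E₁ : C × A → ℂ := fun z => Complex.exp (((p z.2 + β (z.2, z.1) + r z.1 : ℝ) : ℂ) * Complex.I
    + ((R z.2 + S z.1 : ℝ) : ℂ)) with hE₁def
  have hE₁norm : ∀ z, ‖E₁ z‖ = Real.exp (S z.1) * Real.exp (R z.2) := by
    intro z
    rw [hE₁def, norm_cexp_aux, Real.exp_add, mul_comm]
  have hE₁meas : Measurable E₁ := by
    have m1 : Measurable fun z : C × A => (p z.2 + β (z.2, z.1) + r z.1 : ℝ) :=
      ((hp.comp measurable_snd).add (hβ.comp (measurable_snd.prodMk measurable_fst))).add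
        (hr.comp measurable_fst)
    have m2 : Measurable fun z : C × A => (R z.2 + S z.1 : ℝ) :=
      (hR.comp measurable_snd).add (hS.comp measurable_fst)
    exact Measurable.cexp (((Complex.measurable_ofReal.comp m1).mul_const Complex.I).add
      (Complex.measurable_ofReal.comp m2))
  have hE₁int : Integrable E₁ (γ.prod α) := by
    refine Integrable.mono' (hIS.mul_prod hIR) hE₁meas.aestronglyMeasurable ?_
    filter_upwards with z
    rw [hE₁norm]
  set h : C → ℂ := fun c => ∫ a, E₁ (c, a) ∂α with hhdef
  have hmeas_h : StronglyMeasurable h := hE₁meas.stronglyMeasurable.integral_prod_right'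
  have hsplit : ∫ z, E₁ z ∂(γ.prod α) = ∫ c, h c ∂γ := integral_prod _ hE₁int
  set K₀ : ℝ := ∫ a, Real.exp (R a) ∂α with hK₀def
  have hK₀0 : 0 ≤ K₀ := integral_nonneg fun a => (Real.exp_pos _).le
  have hhnorm : ∀ c, ‖h c‖ ≤ Real.exp (S c) * K₀ := by
    intro c
    calc ‖h c‖ ≤ ∫ a, ‖E₁ (c, a)‖ ∂α := norm_integral_le_integral_norm _
      _ = ∫ a, Real.exp (S c) * Real.exp (R a) ∂α := by simp_rw [hE₁norm]
      _ = Real.exp (S c) * K₀ := by rw [integral_const_mul]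
  have hInt_hnorm : Integrable (fun c => ‖h c‖) γ := by
    refine Integrable.mono' (hIS.mul_const K₀) hmeas_h.norm.aestronglyMeasurable ?_
    filter_upwards with c
    rw [norm_norm]
    exact hhnorm c
  have hInt_hnorm2 : Integrable (fun c => ‖h c‖ ^ 2) γ := by
    have hb : Integrable (fun c => Real.exp (2 * S c) * K₀ ^ 2) γ := hIS2.mul_const _
    have hm : AEStronglyMeasurable (fun c => ‖h c‖ ^ 2) γ := by
      simp_rw [pow_two]
      exact (hmeas_h.norm.mul hmeas_h.norm).aestronglyMeasurable
    refine Integrable.mono' hb hm ?_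
    filter_upwards with c
    rw [Real.norm_eq_abs, abs_of_nonneg (sq_nonneg _), two_mul, Real.exp_add]
    nlinarith [hhnorm c, norm_nonneg (h c), hK₀0, (Real.exp_pos (S c)).le]
  -- Jensen: (∫ ‖h‖)² ≤ ∫ ‖h‖²
  set m : ℝ := ∫ c, ‖h c‖ ∂γ with hmdef
  set T : ℝ := ∫ c, ‖h c‖ ^ 2 ∂γ with hTdef
  have hT0 : 0 ≤ T := integral_nonneg fun c => sq_nonneg _
  have jensen : m ^ 2 ≤ T := by
    have h0 : 0 ≤ ∫ c, (‖h c‖ - m) ^ 2 ∂γ := integral_nonneg fun c => sq_nonneg _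
    have i2 : Integrable (fun c => (2 * m) * ‖h c‖) γ := hInt_hnorm.const_mul (2 * m)
    have i1 : Integrable (fun c => ‖h c‖ ^ 2 - (2 * m) * ‖h c‖) γ := hInt_hnorm2.sub i2
    have e2 : (∫ c, ((‖h c‖ ^ 2 - (2 * m) * ‖h c‖) + m ^ 2) ∂γ) = T - 2 * m * m + m ^ 2 := by
      rw [integral_add i1 (integrable_const _), integral_sub hInt_hnorm2 i2,
        integral_const_mul (2 * m) (fun c => ‖h c‖),
        integral_const, probReal_univ, smul_eq_mul, one_mul, ← hmdef, ← hTdef]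
    have e3 : (∫ c, (‖h c‖ - m) ^ 2 ∂γ) = ∫ c, ((‖h c‖ ^ 2 - (2 * m) * ‖h c‖) + m ^ 2) ∂γ := by
      refine integral_congr_ae (Filter.Eventually.of_forall fun c => ?_)
      ring
    rw [e3, e2] at h0
    nlinarith
  have lhs_le : ‖∫ z, E₁ z ∂(γ.prod α)‖ ^ 2 ≤ T := by
    rw [hsplit]
    have h1 : ‖∫ c, h c ∂γ‖ ≤ m := norm_integral_le_integral_norm _
    calc ‖∫ c, h c ∂γ‖ ^ 2 ≤ m ^ 2 := by
          have h0 : 0 ≤ ‖∫ c, h c ∂γ‖ := norm_nonneg _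
          nlinarith
      _ ≤ T := jensen
  -- Expand ∫ ‖h‖² as a double integral
  set K : A × A → ℂ := fun w => Complex.exp (((p w.1 - p w.2 : ℝ) : ℂ) * Complex.I
    + ((R w.1 + R w.2 : ℝ) : ℂ)) with hKdef
  set Ψ : (A × A) × C → ℂ := fun z => Complex.exp (((β (z.1.1, z.2) - β (z.1.2, z.2) : ℝ) : ℂ)
    * Complex.I + ((2 * S z.2 : ℝ) : ℂ)) with hΨdef
  have hKmeas : Measurable K := by
    have m1 : Measurable fun w : A × A => (p w.1 - p w.2 : ℝ) :=
      (hp.comp measurable_fst).sub (hp.comp measurable_snd)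
    have m2 : Measurable fun w : A × A => (R w.1 + R w.2 : ℝ) :=
      (hR.comp measurable_fst).add (hR.comp measurable_snd)
    exact Measurable.cexp (((Complex.measurable_ofReal.comp m1).mul_const Complex.I).add
      (Complex.measurable_ofReal.comp m2))
  have hΨmeas : Measurable Ψ := by
    have m1 : Measurable fun z : (A × A) × C => (β (z.1.1, z.2) - β (z.1.2, z.2) : ℝ) :=
      (hβ.comp ((measurable_fst.comp measurable_fst).prodMk measurable_snd)).sub
        (hβ.comp ((measurable_snd.comp measurable_fst).prodMk measurable_snd))
    have m2 : Measurable fun z : (A × A) × C => (2 * S z.2 : ℝ) :=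
      (hS.comp measurable_snd).const_mul 2
    exact Measurable.cexp (((Complex.measurable_ofReal.comp m1).mul_const Complex.I).add
      (Complex.measurable_ofReal.comp m2))
  have key : ∀ c, ((‖h c‖ ^ 2 : ℝ) : ℂ) = ∫ w : A × A, K w * Ψ (w, c) ∂(α.prod α) := by
    intro c
    have conj_h : ∫ a, (starRingEnd ℂ) (E₁ (c, a)) ∂α = (starRingEnd ℂ) (h c) := integral_conj
    have prodmul : (∫ w : A × A, E₁ (c, w.1) * (starRingEnd ℂ) (E₁ (c, w.2)) ∂(α.prod α))
        = (∫ a, E₁ (c, a) ∂α) * ∫ a, (starRingEnd ℂ) (E₁ (c, a)) ∂α :=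
      integral_prod_mul (f := fun x => E₁ (c, x)) (g := fun y => (starRingEnd ℂ) (E₁ (c, y)))
    have pointwise : ∀ w : A × A,
        E₁ (c, w.1) * (starRingEnd ℂ) (E₁ (c, w.2)) = K w * Ψ (w, c) := by
      intro w
      rw [hE₁def, hKdef, hΨdef]
      simp only [← Complex.exp_conj, ← Complex.exp_add]
      congr 1
      simp only [map_add, _root_.map_mul, Complex.conj_ofReal, Complex.conj_I]
      push_cast
      ring
    calc ((‖h c‖ ^ 2 : ℝ) : ℂ) = h c * (starRingEnd ℂ) (h c) := by
          rw [Complex.mul_conj, Complex.normSq_eq_norm_sq]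
      _ = ∫ w : A × A, E₁ (c, w.1) * (starRingEnd ℂ) (E₁ (c, w.2)) ∂(α.prod α) := by
          rw [prodmul, conj_h]
      _ = ∫ w : A × A, K w * Ψ (w, c) ∂(α.prod α) := by simp_rw [pointwise]
  have hKnorm : ∀ w : A × A, ‖K w‖ = Real.exp (R w.1 + R w.2) := fun w => by
    rw [hKdef, norm_cexp_aux]
  have hΨnorm : ∀ z : (A × A) × C, ‖Ψ z‖ = Real.exp (2 * S z.2) := fun z => by
    rw [hΨdef, norm_cexp_aux]
  have int_uncurry : Integrable (Function.uncurry fun c (w : A × A) => K w * Ψ (w, c))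
      (γ.prod (α.prod α)) := by
    have hb : Integrable (fun z : C × (A × A) =>
        Real.exp (2 * S z.1) * (Real.exp (R z.2.1) * Real.exp (R z.2.2))) (γ.prod (α.prod α)) :=
      hIS2.mul_prod (hIR.mul_prod hIR)
    have hm : Measurable fun z : C × (A × A) => K z.2 * Ψ (z.2, z.1) :=
      (hKmeas.comp measurable_snd).mul (hΨmeas.comp (measurable_snd.prodMk measurable_fst))
    refine Integrable.mono' hb hm.aestronglyMeasurable ?_
    filter_upwards with z
    rw [Function.uncurry, norm_mul, hKnorm, hΨnorm]
    rw [Real.exp_add]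
    apply le_of_eq
    ring
  have hTc : (T : ℂ) = ∫ w : A × A, K w * (∫ c, Ψ (w, c) ∂γ) ∂(α.prod α) := by
    have h1 : (T : ℂ) = ∫ c, ((‖h c‖ ^ 2 : ℝ) : ℂ) ∂γ := integral_ofReal.symm
    rw [h1]
    calc (∫ c, ((‖h c‖ ^ 2 : ℝ) : ℂ) ∂γ)
        = ∫ c, ∫ w : A × A, K w * Ψ (w, c) ∂(α.prod α) ∂γ := by simp_rw [key]
      _ = ∫ w : A × A, ∫ c, K w * Ψ (w, c) ∂γ ∂(α.prod α) := integral_integral_swap int_uncurry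
      _ = ∫ w : A × A, K w * (∫ c, Ψ (w, c) ∂γ) ∂(α.prod α) := by
          congr 1
          funext w
          simp_rw [← smul_eq_mul, integral_smul]
  have T_le : T ≤ ∫ w : A × A, Real.exp (R w.1 + R w.2) * ‖∫ c, Ψ (w, c) ∂γ‖ ∂(α.prod α) := by
    have hTnorm : T = ‖(T : ℂ)‖ := by
      rw [Complex.norm_real, Real.norm_eq_abs, abs_of_nonneg hT0]
    rw [hTnorm, hTc]
    refine le_trans (norm_integral_le_integral_norm _) (le_of_eq ?_)
    refine integral_congr_ae (Filter.Eventually.of_forall fun w => ?_)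
    simp only [norm_mul, hKnorm]
  exact le_trans lhs_le T_le

private lemma restr_measurable {n : ℕ} (J' : Finset (Fin n)) : Measurable (restr J') :=
  measurable_pi_lambda _ fun i => by
    by_cases h : i ∈ J'
    · simpa [restr, h] using measurable_pi_apply i
    · simpa [restr, h] using measurable_const

private lemma indep_pair {Ω : Type*} [MeasurableSpace Ω] {μ : Measure Ω} {n : ℕ}
    (g : (Fin n ⊕ Fin n) → Ω → ℝ) (hgmeas : ∀ k, Measurable (g k))
    (hindep : iIndepFun g μ)
    (S T : Finset (Fin n)) (e₁ e₂ : Fin n ↪ (Fin n ⊕ Fin n))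
    (hdisj : Disjoint (S.map e₁) (T.map e₂)) :
    IndepFun (fun ω => restr S (fun i => g (e₁ i) ω))
      (fun ω => restr T (fun i => g (e₂ i) ω)) μ := by
  classical
  have h0 := hindep.indepFun_finset (S.map e₁) (T.map e₂) hdisj hgmeas
  set φ₁ : (↥(S.map e₁) → ℝ) → (Fin n → ℝ) :=
    fun tt i => if h : i ∈ S then tt ⟨e₁ i, Finset.mem_map_of_mem _ h⟩ else 0 with hφ₁
  set φ₂ : (↥(T.map e₂) → ℝ) → (Fin n → ℝ) :=
    fun tt i => if h : i ∈ T then tt ⟨e₂ i, Finset.mem_map_of_mem _ h⟩ else 0 with hφ₂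
  have hφ₁meas : Measurable φ₁ := measurable_pi_lambda _ fun i => by
    by_cases h : i ∈ S
    · simp only [hφ₁, dif_pos h]; exact measurable_pi_apply _
    · simp only [hφ₁, dif_neg h]; exact measurable_const
  have hφ₂meas : Measurable φ₂ := measurable_pi_lambda _ fun i => by
    by_cases h : i ∈ T
    · simp only [hφ₂, dif_pos h]; exact measurable_pi_apply _
    · simp only [hφ₂, dif_neg h]; exact measurable_const
  have hc₁ : (fun ω => restr S (fun i => g (e₁ i) ω))
      = φ₁ ∘ (fun ω (k : ↥(S.map e₁)) => g k ω) := by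
    funext ω
    funext i
    by_cases h : i ∈ S <;> simp [restr, hφ₁, h, Function.comp]
  have hc₂ : (fun ω => restr T (fun i => g (e₂ i) ω))
      = φ₂ ∘ (fun ω (k : ↥(T.map e₂)) => g k ω) := by
    funext ω
    funext i
    by_cases h : i ∈ T <;> simp [restr, hφ₂, h, Function.comp]
  rw [hc₁, hc₂]
  exact h0.comp hφ₁meas hφ₂meas

-- support lemmas for the main theorem
private lemma matrix_symm_entry {n : ℕ} {M : Matrix (Fin n) (Fin n) ℝ} (hM : M.IsSymm)
    (a b : Fin n) : M a b = M b a := by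
  have h := congrFun (congrFun hM b) a
  rwa [Matrix.transpose_apply] at h

private lemma bb_symm_sum {n : ℕ} {M : Matrix (Fin n) (Fin n) ℝ} (hM : M.IsSymm)
    (v w : Fin n → ℝ) : (∑ i, M.mulVec v i * w i) = ∑ i, M.mulVec w i * v i := by
  simp only [Matrix.mulVec, dotProduct, Finset.sum_mul]
  rw [Finset.sum_comm]
  refine Finset.sum_congr rfl fun x _ => Finset.sum_congr rfl fun y _ => ?_
  rw [matrix_symm_entry hM y x]
  ring

private lemma quad_split {n : ℕ} {M : Matrix (Fin n) (Fin n) ℝ} (hM : M.IsSymm)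
    (a c : Fin n → ℝ) :
    (∑ i, M.mulVec (a + c) i * (a + c) i)
      = (∑ i, M.mulVec a i * a i) + 2 * (∑ i, M.mulVec a i * c i)
        + (∑ i, M.mulVec c i * c i) := by
  have h1 : (∑ i, M.mulVec c i * a i) = ∑ i, M.mulVec a i * c i := bb_symm_sum hM c a
  simp only [Matrix.mulVec_add, Pi.add_apply]
  simp_rw [add_mul, mul_add, Finset.sum_add_distrib]
  linarith

private lemma bb_sub_sum {n : ℕ} (M : Matrix (Fin n) (Fin n) ℝ) (a a' c : Fin n → ℝ) :
    (∑ i, M.mulVec (a - a') i * c i)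
      = (∑ i, M.mulVec a i * c i) - ∑ i, M.mulVec a' i * c i := by
  simp only [Matrix.mulVec_sub, Pi.sub_apply, sub_mul, Finset.sum_sub_distrib]

private lemma L_add_sum {n : ℕ} (u : Fin n → ℝ) (a c : Fin n → ℝ) :
    (∑ i, (a + c) i * u i) = (∑ i, a i * u i) + ∑ i, c i * u i := by
  simp only [Pi.add_apply, add_mul, Finset.sum_add_distrib]

private lemma mulVec_cont {n : ℕ} (M : Matrix (Fin n) (Fin n) ℝ) (i : Fin n) :
    Continuous fun v : Fin n → ℝ => M.mulVec v i := by
  simp only [Matrix.mulVec, dotProduct]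
  exact continuous_finset_sum _ fun j _ => continuous_const.mul (continuous_apply j)

private lemma q_cont {n : ℕ} (M : Matrix (Fin n) (Fin n) ℝ) :
    Continuous fun v : Fin n → ℝ => ∑ i, M.mulVec v i * v i :=
  continuous_finset_sum _ fun i _ => (mulVec_cont M i).mul (continuous_apply i)

private lemma L_cont {n : ℕ} (u : Fin n → ℝ) :
    Continuous fun v : Fin n → ℝ => ∑ i, v i * u i :=
  continuous_finset_sum _ fun i _ => (continuous_apply i).mul continuous_const

private lemma bb_cont {n : ℕ} (M : Matrix (Fin n) (Fin n) ℝ) :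
    Continuous fun z : (Fin n → ℝ) × (Fin n → ℝ) => ∑ i, M.mulVec z.1 i * z.2 i :=
  continuous_finset_sum _ fun i _ =>
    ((mulVec_cont M i).comp continuous_fst).mul ((continuous_apply i).comp continuous_snd)

private lemma restr_add' {n : ℕ} (J' : Finset (Fin n)) (v w : Fin n → ℝ) :
    restr J' (v + w) = restr J' v + restr J' w := by
  funext i
  by_cases h : i ∈ J' <;> simp [restr, h]

private lemma restr_sub' {n : ℕ} (J' : Finset (Fin n)) (v w : Fin n → ℝ) :
    restr J' (v - w) = restr J' v - restr J' w := by
  funext i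
  by_cases h : i ∈ J' <;> simp [restr, h]

private lemma restr_split {n : ℕ} {J I : Finset (Fin n)} (hJI : Disjoint J I)
    (hJIu : J ∪ I = Finset.univ) (v : Fin n → ℝ) :
    restr J v + restr I v = v := by
  funext i
  have hiJI : i ∈ J ∨ i ∈ I := by
    have h : i ∈ J ∪ I := by rw [hJIu]; exact Finset.mem_univ i
    exact Finset.mem_union.mp h
  by_cases hiJ : i ∈ J
  · have hiI : i ∉ I := fun hiI => (Finset.disjoint_left.mp hJI hiJ hiI)
    simp [restr, hiJ, hiI]
  · have hiI : i ∈ I := hiJI.resolve_left hiJ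
    simp [restr, hiJ, hiI]

private lemma map_vec_sum {Ω : Type*} [MeasurableSpace Ω] (μ : Measure Ω)
    [IsProbabilityMeasure μ] {n : ℕ}
    (g : (Fin n ⊕ Fin n) → Ω → ℝ) (hgmeas : ∀ k, Measurable (g k))
    (hindep : iIndepFun g μ)
    (ν : Measure ℝ) [IsProbabilityMeasure ν] (hgid : ∀ k, μ.map (g k) = ν) :
    (μ.map (fun ω (i : Fin n) => g (Sum.inl i) ω) = Measure.pi (fun _ : Fin n => ν))
    ∧ (μ.map (fun ω (i : Fin n) => g (Sum.inr i) ω) = Measure.pi (fun _ : Fin n => ν)) := by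
  have hfull : μ.map (fun ω k => g k ω) = Measure.pi (fun _ : Fin n ⊕ Fin n => ν) := by
    rw [map_pi_of_iIndep μ g hgmeas hindep]
    exact congrArg Measure.pi (funext hgid)
  have hgvec : Measurable fun ω (k : Fin n ⊕ Fin n) => g k ω := measurable_pi_lambda _ hgmeas
  have hmp := measurePreserving_sumPiEquivProdPi (fun _ : Fin n ⊕ Fin n => ν)
  haveI : IsProbabilityMeasure (Measure.pi (fun _ : Fin n => ν)) := inferInstance
  constructor
  · have hcomp : (fun ω (i : Fin n) => g (Sum.inl i) ω)
        = (Prod.fst ∘ (MeasurableEquiv.sumPiEquivProdPi (fun _ : Fin n ⊕ Fin n => ℝ)))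
          ∘ (fun ω k => g k ω) := rfl
    rw [hcomp, ← Measure.map_map (measurable_fst.comp (MeasurableEquiv.measurable _)) hgvec,
      hfull, ← Measure.map_map measurable_fst (MeasurableEquiv.measurable _), hmp.map_eq,
      Measure.map_fst_prod]
    simp
  · have hcomp : (fun ω (i : Fin n) => g (Sum.inr i) ω)
        = (Prod.snd ∘ (MeasurableEquiv.sumPiEquivProdPi (fun _ : Fin n ⊕ Fin n => ℝ)))
          ∘ (fun ω k => g k ω) := rfl
    rw [hcomp, ← Measure.map_map (measurable_snd.comp (MeasurableEquiv.measurable _)) hgvec,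
      hfull, ← Measure.map_map measurable_snd (MeasurableEquiv.measurable _), hmp.map_eq,
      Measure.map_snd_prod]
    simp

private lemma integrable_exp_restr {n : ℕ} (ν : Measure ℝ) [IsProbabilityMeasure ν]
    (hexpν : ∀ c : ℝ, Integrable (fun t => Real.exp (c * t)) ν)
    (J' : Finset (Fin n)) (u : Fin n → ℝ) (t : ℝ) :
    Integrable (fun a => Real.exp (t * ∑ i, a i * u i))
      ((Measure.pi fun _ : Fin n => ν).map (restr J')) := by
  classical
  have hsm : AEStronglyMeasurable (fun a : Fin n → ℝ => Real.exp (t * ∑ i, a i * u i))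
      ((Measure.pi fun _ : Fin n => ν).map (restr J')) :=
    (Real.continuous_exp.comp (continuous_const.mul (L_cont u))).aestronglyMeasurable
  rw [integrable_map_measure hsm (restr_measurable J').aemeasurable]
  have hfun : ((fun a : Fin n → ℝ => Real.exp (t * ∑ i, a i * u i)) ∘ restr J')
      = fun v : Fin n → ℝ => ∏ i, Real.exp ((if i ∈ J' then t * u i else 0) * v i) := by
    funext v
    rw [Function.comp_apply, ← Real.exp_sum]
    congr 1
    rw [Finset.mul_sum]
    refine Finset.sum_congr rfl fun i _ => ?_
    by_cases h : i ∈ J' <;> simp [restr, h] <;> ring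
  rw [hfun]
  exact integrable_pi_prod ν _ fun i => hexpν _

set_option maxHeartbeats 2000000 in
/-- **Lemma (decoupling with an exponential tilt).**
Let `ζ` be subgaussian, let `X, X' ∈ ℝ^n` be independent random vectors with i.i.d.
coordinates distributed as `ζ` (all `2n` coordinates jointly independent), and let
`J ∪ I = [n]` be a partition.  For an `n × n` real symmetric matrix `M`, `u ∈ ℝ^n`
and `θ ∈ ℝ`:
`|𝔼_X e^{2πiθ⟨MX,X⟩+⟨X,u⟩}|² ≤ 𝔼_{X_J,X'_J}[e^{⟨(X+X')_J,u⟩}·|𝔼_{X_I} e^{4πiθ⟨M(X−X')_J,X_I⟩+2⟨X_I,u⟩}|]`. -/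
theorem decoupling_with_exponential_tilt
    (Ω : Type) [MeasurableSpace Ω] (μ : Measure Ω) [IsProbabilityMeasure μ]
    (ζ : Ω → ℝ) (hζ : IsSubgaussianRV μ ζ)
    (n : ℕ) (X X' : Fin n → Ω → ℝ)
    (hm : ∀ i, Measurable (X i)) (hm' : ∀ i, Measurable (X' i))
    (hid : ∀ i, Measure.map (X i) μ = Measure.map ζ μ)
    (hid' : ∀ i, Measure.map (X' i) μ = Measure.map ζ μ)
    (hindep : iIndepFun (Sum.elim X X') μ)
    (J I : Finset (Fin n)) (hJI : Disjoint J I) (hJIunion : J ∪ I = Finset.univ)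
    (M : Matrix (Fin n) (Fin n) ℝ) (hM : M.IsSymm) (u : Fin n → ℝ) (θ : ℝ) :
    ‖∫ ω, Complex.exp
        (((2 * Real.pi * θ * (∑ i, M.mulVec (fun j => X j ω) i * X i ω) : ℝ) : ℂ)
            * Complex.I +
          ((∑ i, X i ω * u i : ℝ) : ℂ)) ∂μ‖ ^ 2 ≤
      ∫ ω, Real.exp (∑ i, restr J (fun j => X j ω + X' j ω) i * u i) *
        ‖∫ ω', Complex.exp
            (((4 * Real.pi * θ *
                (∑ i, M.mulVec (restr J (fun j => X j ω - X' j ω)) i *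
                  restr I (fun j => X j ω') i) : ℝ) : ℂ) * Complex.I +
              ((2 * ∑ i, restr I (fun j => X j ω') i * u i : ℝ) : ℂ)) ∂μ‖ ∂μ := by
  classical
  obtain ⟨hζmeas, B, hB⟩ := hζ
  haveI hνprob : IsProbabilityMeasure (μ.map ζ) := Measure.isProbabilityMeasure_map hζmeas.aemeasurable
  have hgmeas : ∀ k, Measurable (Sum.elim X X' k) := by rintro (i | i); exacts [hm i, hm' i]
  have hgid : ∀ k, μ.map (Sum.elim X X' k) = μ.map ζ := by
    rintro (i | i); exacts [hid i, hid' i]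
  have hexpν : ∀ c0 : ℝ, Integrable (fun t => Real.exp (c0 * t)) (μ.map ζ) := by
    intro c0
    have h1 := integrable_exp_mul_subg μ ζ hζmeas B hB c0
    have h2 : AEStronglyMeasurable (fun t : ℝ => Real.exp (c0 * t)) (μ.map ζ) :=
      (Real.continuous_exp.comp (continuous_const.mul continuous_id)).aestronglyMeasurable
    rwa [integrable_map_measure h2 hζmeas.aemeasurable]
  -- laws of the full coordinate vectors
  have hlaws := map_vec_sum μ (Sum.elim X X') hgmeas hindep (μ.map ζ) hgid
  have hXvec_law : μ.map (fun ω (i : Fin n) => X i ω)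
      = Measure.pi (fun _ : Fin n => μ.map ζ) := hlaws.1
  have hX'vec_law : μ.map (fun ω (i : Fin n) => X' i ω)
      = Measure.pi (fun _ : Fin n => μ.map ζ) := hlaws.2
  -- measurability of the grouped vectors
  have hXvecmeas : Measurable fun ω (i : Fin n) => X i ω := measurable_pi_lambda _ hm
  have hX'vecmeas : Measurable fun ω (i : Fin n) => X' i ω := measurable_pi_lambda _ hm'
  have hmeasY : Measurable fun ω => restr J (fun j => X j ω) :=
    (restr_measurable J).comp hXvecmeas
  have hmeasY' : Measurable fun ω => restr J (fun j => X' j ω) :=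
    (restr_measurable J).comp hX'vecmeas
  have hmeasZ : Measurable fun ω => restr I (fun j => X j ω) :=
    (restr_measurable I).comp hXvecmeas
  -- the two distinguished measures
  set αm : Measure (Fin n → ℝ) := μ.map (fun ω => restr J (fun j => X j ω)) with hαm
  set γm : Measure (Fin n → ℝ) := μ.map (fun ω => restr I (fun j => X j ω)) with hγm
  haveI : IsProbabilityMeasure αm := Measure.isProbabilityMeasure_map hmeasY.aemeasurable
  haveI : IsProbabilityMeasure γm := Measure.isProbabilityMeasure_map hmeasZ.aemeasurable
  have hαm_pi : αm = (Measure.pi fun _ : Fin n => μ.map ζ).map (restr J) := by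
    have h := Measure.map_map (μ := μ) (restr_measurable J) hXvecmeas
    rw [hXvec_law] at h
    exact h.symm
  have hγm_pi : γm = (Measure.pi fun _ : Fin n => μ.map ζ).map (restr I) := by
    have h := Measure.map_map (μ := μ) (restr_measurable I) hXvecmeas
    rw [hXvec_law] at h
    exact h.symm
  have hYlaw_eq : μ.map (fun ω => restr J (fun j => X' j ω)) = αm := by
    have h := Measure.map_map (μ := μ) (restr_measurable J) hX'vecmeas
    rw [hX'vec_law] at h
    rw [hαm_pi]
    exact h.symm
  -- independence
  have hdisjIJ : Disjoint (I.map (Function.Embedding.inl : Fin n ↪ Fin n ⊕ Fin n))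
      (J.map Function.Embedding.inl) := by
    rw [Finset.disjoint_map]
    exact hJI.symm
  have hdisjJJ' : Disjoint (J.map (Function.Embedding.inl : Fin n ↪ Fin n ⊕ Fin n))
      (J.map (Function.Embedding.inr : Fin n ↪ Fin n ⊕ Fin n)) := by
    rw [Finset.disjoint_left]
    rintro k hk hk'
    rw [Finset.mem_map] at hk hk'
    obtain ⟨a, -, rfl⟩ := hk
    obtain ⟨b, -, hb⟩ := hk'
    simp at hb
  have hZY : IndepFun (fun ω => restr I (fun j => X j ω))
      (fun ω => restr J (fun j => X j ω)) μ :=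
    indep_pair (Sum.elim X X') hgmeas hindep I J Function.Embedding.inl
      Function.Embedding.inl hdisjIJ
  have hYY' : IndepFun (fun ω => restr J (fun j => X j ω))
      (fun ω => restr J (fun j => X' j ω)) μ :=
    indep_pair (Sum.elim X X') hgmeas hindep J J Function.Embedding.inl
      Function.Embedding.inr hdisjJJ'
  have hpairZY : μ.map (fun ω => (restr I (fun j => X j ω), restr J (fun j => X j ω)))
      = γm.prod αm := by
    rw [hγm, hαm]
    exact (indepFun_iff_map_prod_eq_prod_map_map hmeasZ.aemeasurable hmeasY.aemeasurable).mp hZY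
  have hpairYY' : μ.map (fun ω => (restr J (fun j => X j ω), restr J (fun j => X' j ω)))
      = αm.prod αm := by
    have h := (indepFun_iff_map_prod_eq_prod_map_map hmeasY.aemeasurable
      hmeasY'.aemeasurable).mp hYY'
    rw [h, hYlaw_eq, ← hαm]
  -- integrability inputs for the abstract lemma
  have hIR : Integrable (fun a : Fin n → ℝ => Real.exp (∑ i, a i * u i)) αm := by
    rw [hαm_pi]
    have h := integrable_exp_restr (μ.map ζ) hexpν J u 1
    simpa using h
  have hIS : Integrable (fun c : Fin n → ℝ => Real.exp (∑ i, c i * u i)) γm := by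
    rw [hγm_pi]
    have h := integrable_exp_restr (μ.map ζ) hexpν I u 1
    simpa using h
  have hIS2 : Integrable (fun c : Fin n → ℝ => Real.exp (2 * ∑ i, c i * u i)) γm := by
    rw [hγm_pi]
    exact integrable_exp_restr (μ.map ζ) hexpν I u 2
  -- the abstract decoupling inequality
  have KEY := abstract_decoupling αm γm
    (fun a : Fin n → ℝ => 2 * Real.pi * θ * ∑ i, M.mulVec a i * a i)
    (fun a : Fin n → ℝ => ∑ i, a i * u i)
    (fun c : Fin n → ℝ => 2 * Real.pi * θ * ∑ i, M.mulVec c i * c i)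
    (fun c : Fin n → ℝ => ∑ i, c i * u i)
    (fun z : (Fin n → ℝ) × (Fin n → ℝ) => 4 * Real.pi * θ * ∑ i, M.mulVec z.1 i * z.2 i)
    (continuous_const.mul (q_cont M)).measurable (L_cont u).measurable
    (continuous_const.mul (q_cont M)).measurable (L_cont u).measurable
    (continuous_const.mul (bb_cont M)).measurable hIR hIS hIS2
  -- continuity of the two complex integrands
  have hFcont : Continuous fun z : (Fin n → ℝ) × (Fin n → ℝ) =>
      Complex.exp ((((2 * Real.pi * θ * ∑ i, M.mulVec z.2 i * z.2 i)
          + (4 * Real.pi * θ * ∑ i, M.mulVec z.2 i * z.1 i)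
          + (2 * Real.pi * θ * ∑ i, M.mulVec z.1 i * z.1 i) : ℝ) : ℂ) * Complex.I
        + (((∑ i, z.2 i * u i) + (∑ i, z.1 i * u i) : ℝ) : ℂ)) := by
    have c1 : Continuous fun z : (Fin n → ℝ) × (Fin n → ℝ) =>
        ((2 * Real.pi * θ * ∑ i, M.mulVec z.2 i * z.2 i)
          + (4 * Real.pi * θ * ∑ i, M.mulVec z.2 i * z.1 i)
          + (2 * Real.pi * θ * ∑ i, M.mulVec z.1 i * z.1 i) : ℝ) :=
      ((continuous_const.mul ((q_cont M).comp continuous_snd)).add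
        (continuous_const.mul ((bb_cont M).comp (continuous_snd.prodMk continuous_fst)))).add
        (continuous_const.mul ((q_cont M).comp continuous_fst))
    have c2 : Continuous fun z : (Fin n → ℝ) × (Fin n → ℝ) =>
        ((∑ i, z.2 i * u i) + (∑ i, z.1 i * u i) : ℝ) :=
      ((L_cont u).comp continuous_snd).add ((L_cont u).comp continuous_fst)
    exact Complex.continuous_exp.comp
      (((Complex.continuous_ofReal.comp c1).mul continuous_const).add
        (Complex.continuous_ofReal.comp c2))
  have hΨ₂cont : Continuous fun zc : ((Fin n → ℝ) × (Fin n → ℝ)) × (Fin n → ℝ) =>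
      Complex.exp ((((4 * Real.pi * θ * ∑ i, M.mulVec zc.1.1 i * zc.2 i)
          - (4 * Real.pi * θ * ∑ i, M.mulVec zc.1.2 i * zc.2 i) : ℝ) : ℂ) * Complex.I
        + ((2 * ∑ i, zc.2 i * u i : ℝ) : ℂ)) := by
    have c1 : Continuous fun zc : ((Fin n → ℝ) × (Fin n → ℝ)) × (Fin n → ℝ) =>
        ((4 * Real.pi * θ * ∑ i, M.mulVec zc.1.1 i * zc.2 i)
          - (4 * Real.pi * θ * ∑ i, M.mulVec zc.1.2 i * zc.2 i) : ℝ) :=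
      (continuous_const.mul ((bb_cont M).comp
        ((continuous_fst.comp continuous_fst).prodMk continuous_snd))).sub
        (continuous_const.mul ((bb_cont M).comp
          ((continuous_snd.comp continuous_fst).prodMk continuous_snd)))
    have c2 : Continuous fun zc : ((Fin n → ℝ) × (Fin n → ℝ)) × (Fin n → ℝ) =>
        (2 * ∑ i, zc.2 i * u i : ℝ) :=
      continuous_const.mul ((L_cont u).comp continuous_snd)
    exact Complex.continuous_exp.comp
      (((Complex.continuous_ofReal.comp c1).mul continuous_const).add
        (Complex.continuous_ofReal.comp c2))

  -- identify the left-hand side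
  have hLHSeq : (∫ ω, Complex.exp
        (((2 * Real.pi * θ * (∑ i, M.mulVec (fun j => X j ω) i * X i ω) : ℝ) : ℂ) * Complex.I +
          ((∑ i, X i ω * u i : ℝ) : ℂ)) ∂μ)
      = ∫ z : (Fin n → ℝ) × (Fin n → ℝ),
          Complex.exp ((((2 * Real.pi * θ * ∑ i, M.mulVec z.2 i * z.2 i)
              + (4 * Real.pi * θ * ∑ i, M.mulVec z.2 i * z.1 i)
              + (2 * Real.pi * θ * ∑ i, M.mulVec z.1 i * z.1 i) : ℝ) : ℂ) * Complex.I
            + (((∑ i, z.2 i * u i) + (∑ i, z.1 i * u i) : ℝ) : ℂ)) ∂(γm.prod αm) := by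
    rw [← hpairZY, integral_map (hmeasZ.prodMk hmeasY).aemeasurable
      (by rw [hpairZY]; exact hFcont.aestronglyMeasurable)]
    refine integral_congr_ae (Filter.Eventually.of_forall fun ω => ?_)
    simp only []
    have hsplitX : restr J (fun j => X j ω) + restr I (fun j => X j ω) = (fun j => X j ω) :=
      restr_split hJI hJIunion _
    have eA : 2 * Real.pi * θ * (∑ i, M.mulVec (fun j => X j ω) i * X i ω)
        = (2 * Real.pi * θ
              * ∑ i, M.mulVec (restr J (fun j => X j ω)) i * restr J (fun j => X j ω) i)
          + (4 * Real.pi * θ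
              * ∑ i, M.mulVec (restr J (fun j => X j ω)) i * restr I (fun j => X j ω) i)
          + (2 * Real.pi * θ
              * ∑ i, M.mulVec (restr I (fun j => X j ω)) i * restr I (fun j => X j ω) i) := by
      conv_lhs => rw [show (∑ i, M.mulVec (fun j => X j ω) i * X i ω)
          = ∑ i, M.mulVec (fun j => X j ω) i * (fun j => X j ω) i from rfl, ← hsplitX]
      rw [quad_split hM]
      ring
    have eB : (∑ i, X i ω * u i)
        = (∑ i, restr J (fun j => X j ω) i * u i)
          + ∑ i, restr I (fun j => X j ω) i * u i := by
      conv_lhs => rw [show (∑ i, X i ω * u i) = ∑ i, (fun j => X j ω) i * u i from rfl,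
        ← hsplitX]
      rw [L_add_sum]
    rw [eA, eB]
  -- identify the right-hand side
  have hRHSeq : (∫ w : (Fin n → ℝ) × (Fin n → ℝ),
        Real.exp ((∑ i, w.1 i * u i) + (∑ i, w.2 i * u i)) *
          ‖∫ c, Complex.exp ((((4 * Real.pi * θ * ∑ i, M.mulVec w.1 i * c i)
              - (4 * Real.pi * θ * ∑ i, M.mulVec w.2 i * c i) : ℝ) : ℂ) * Complex.I
            + ((2 * ∑ i, c i * u i : ℝ) : ℂ)) ∂γm‖ ∂(αm.prod αm))
      = ∫ ω, Real.exp (∑ i, restr J (fun j => X j ω + X' j ω) i * u i) *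
          ‖∫ ω', Complex.exp
              (((4 * Real.pi * θ *
                  (∑ i, M.mulVec (restr J (fun j => X j ω - X' j ω)) i *
                    restr I (fun j => X j ω') i) : ℝ) : ℂ) * Complex.I +
                ((2 * ∑ i, restr I (fun j => X j ω') i * u i : ℝ) : ℂ)) ∂μ‖ ∂μ := by
    have hGsm : StronglyMeasurable fun w : (Fin n → ℝ) × (Fin n → ℝ) =>
        Real.exp ((∑ i, w.1 i * u i) + (∑ i, w.2 i * u i)) *
          ‖∫ c, Complex.exp ((((4 * Real.pi * θ * ∑ i, M.mulVec w.1 i * c i)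
              - (4 * Real.pi * θ * ∑ i, M.mulVec w.2 i * c i) : ℝ) : ℂ) * Complex.I
            + ((2 * ∑ i, c i * u i : ℝ) : ℂ)) ∂γm‖ := by
      have h1 : Continuous fun w : (Fin n → ℝ) × (Fin n → ℝ) =>
          Real.exp ((∑ i, w.1 i * u i) + (∑ i, w.2 i * u i)) :=
        Real.continuous_exp.comp
          (((L_cont u).comp continuous_fst).add ((L_cont u).comp continuous_snd))
      exact h1.stronglyMeasurable.mul
        ((hΨ₂cont.stronglyMeasurable.integral_prod_right').norm)
    rw [← hpairYY', integral_map (hmeasY.prodMk hmeasY').aemeasurable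
      hGsm.aestronglyMeasurable]
    refine integral_congr_ae (Filter.Eventually.of_forall fun ω => ?_)
    simp only []
    have e1 : (∑ i, restr J (fun j => X j ω + X' j ω) i * u i)
        = (∑ i, restr J (fun j => X j ω) i * u i)
          + ∑ i, restr J (fun j => X' j ω) i * u i := by
      rw [show (fun j => X j ω + X' j ω) = (fun j => X j ω) + (fun j => X' j ω) from rfl,
        restr_add', L_add_sum]
    have e2 : (∫ ω', Complex.exp
          (((4 * Real.pi * θ *
              (∑ i, M.mulVec (restr J (fun j => X j ω - X' j ω)) i *
                restr I (fun j => X j ω') i) : ℝ) : ℂ) * Complex.I +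
            ((2 * ∑ i, restr I (fun j => X j ω') i * u i : ℝ) : ℂ)) ∂μ)
        = ∫ c, Complex.exp
            ((((4 * Real.pi * θ * ∑ i, M.mulVec (restr J (fun j => X j ω)) i * c i)
              - (4 * Real.pi * θ * ∑ i, M.mulVec (restr J (fun j => X' j ω)) i * c i) : ℝ) : ℂ)
                * Complex.I
            + ((2 * ∑ i, c i * u i : ℝ) : ℂ)) ∂γm := by
      have hsm2 : AEStronglyMeasurable (fun c : Fin n → ℝ => Complex.exp
          ((((4 * Real.pi * θ * ∑ i, M.mulVec (restr J (fun j => X j ω)) i * c i)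
            - (4 * Real.pi * θ * ∑ i, M.mulVec (restr J (fun j => X' j ω)) i * c i) : ℝ) : ℂ)
              * Complex.I
          + ((2 * ∑ i, c i * u i : ℝ) : ℂ)))
          (Measure.map (fun ω0 => restr I (fun j => X j ω0)) μ) := by
        refine Continuous.aestronglyMeasurable ?_
        have hw : ∀ a : Fin n → ℝ, Continuous fun c : Fin n → ℝ => ∑ i, M.mulVec a i * c i :=
          fun a => continuous_finset_sum _ fun i _ => continuous_const.mul (continuous_apply i)
        exact Complex.continuous_exp.comp
          (((Complex.continuous_ofReal.comp
            ((continuous_const.mul (hw _)).sub (continuous_const.mul (hw _)))).mul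
              continuous_const).add
            (Complex.continuous_ofReal.comp (continuous_const.mul (L_cont u))))
      rw [hγm, integral_map (μ := μ) hmeasZ.aemeasurable hsm2]
      refine integral_congr_ae (Filter.Eventually.of_forall fun ω' => ?_)
      simp only []
      have e3 : 4 * Real.pi * θ *
            (∑ i, M.mulVec (restr J (fun j => X j ω - X' j ω)) i *
              restr I (fun j => X j ω') i)
          = (4 * Real.pi * θ
                * ∑ i, M.mulVec (restr J (fun j => X j ω)) i * restr I (fun j => X j ω') i)
            - (4 * Real.pi * θ
                * ∑ i, M.mulVec (restr J (fun j => X' j ω)) i * restr I (fun j => X j ω') i) := by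
        rw [show (fun j => X j ω - X' j ω) = (fun j => X j ω) - (fun j => X' j ω) from rfl,
          restr_sub', bb_sub_sum]
        ring
      rw [e3]
    rw [e1, e2]
  exact le_of_le_of_eq (le_of_eq_of_le (by rw [hLHSeq]) KEY) hRHSeq
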